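/- arXiv:1209.2312 — 4 statements merged into one kernel-verified Lean document; each statement's English description precedes it below -/
import Mathlib

section
/- Let n ≥ 1 and let x ∈ ℝ^n with x ≠ 0. Then in O(1,n+1) one has the decomposition w₀⁻¹ · n̄_x = n̄_y · m · exp(log|x| · H) · n_z, where y = −|x|⁻²x, z = |x|⁻²x, and m is the block diagonal (n+2)×(n+2) matrix with diagonal blocks −1, I_n − 2|x|⁻² x xᵀ, −1. -/
open Matrix

noncomputable section

/-- Embedding of `Fin n` as the middle indices `1,…,n` of `Fin (n+2)`. -/
def idx {n : ℕ} (j : Fin n) : Fin (n + 2) := j.succ.castSucc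

/-- The matrix `N_j = E_{1,j+1} + E_{j+1,1} − E_{j+1,n+2} + E_{n+2,j+1}`. -/
def Nmat (n : ℕ) (j : Fin n) : Matrix (Fin (n + 2)) (Fin (n + 2)) ℝ :=
  Matrix.single 0 (idx j) 1 + Matrix.single (idx j) 0 1
    - Matrix.single (idx j) (Fin.last (n + 1)) 1 + Matrix.single (Fin.last (n + 1)) (idx j) 1

/-- The matrix `N̄_j = E_{1,j+1} + E_{j+1,1} + E_{j+1,n+2} − E_{n+2,j+1}`. -/
def NbarMat (n : ℕ) (j : Fin n) : Matrix (Fin (n + 2)) (Fin (n + 2)) ℝ :=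
  Matrix.single 0 (idx j) 1 + Matrix.single (idx j) 0 1
    + Matrix.single (idx j) (Fin.last (n + 1)) 1 - Matrix.single (Fin.last (n + 1)) (idx j) 1

/-- The matrix `H = 2(E_{1,n+2} + E_{n+2,1})`. -/
def Hmat (n : ℕ) : Matrix (Fin (n + 2)) (Fin (n + 2)) ℝ :=
  2 • (Matrix.single 0 (Fin.last (n + 1)) 1 + Matrix.single (Fin.last (n + 1)) 0 1)

/-- `n_x = exp(Σ_j x_j N_j)`. -/
def nGrp (n : ℕ) (x : Fin n → ℝ) : Matrix (Fin (n + 2)) (Fin (n + 2)) ℝ :=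
  NormedSpace.exp (∑ j, x j • Nmat n j)

/-- `n̄_x = exp(Σ_j x_j N̄_j)`. -/
def nbarGrp (n : ℕ) (x : Fin n → ℝ) : Matrix (Fin (n + 2)) (Fin (n + 2)) ℝ :=
  NormedSpace.exp (∑ j, x j • NbarMat n j)

/-- `w₀ = diag(−1,1,…,1)`. -/
def w0 (n : ℕ) : Matrix (Fin (n + 2)) (Fin (n + 2)) ℝ :=
  diagonal fun i => if i = 0 then -1 else 1

/-- The Euclidean norm on `ℝ^n`. -/
def eunorm {n : ℕ} (x : Fin n → ℝ) : ℝ := Real.sqrt (∑ i, x i ^ 2)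

/-- The block diagonal matrix with diagonal blocks `−1`, `Iₙ − 2|x|⁻² x xᵀ`, `−1`. -/
def mMat (n : ℕ) (x : Fin n → ℝ) : Matrix (Fin (n + 2)) (Fin (n + 2)) ℝ :=
  1 - 2 • Matrix.single (0 : Fin (n + 2)) (0 : Fin (n + 2)) (1 : ℝ)
    - 2 • Matrix.single (Fin.last (n + 1)) (Fin.last (n + 1)) (1 : ℝ)
    - ∑ i, ∑ j, (2 * (eunorm x ^ 2)⁻¹ * x i * x j) • Matrix.single (idx i) (idx j) (1 : ℝ)





lemma idx_ne_zero {n : ℕ} (j : Fin n) : idx j ≠ 0 := by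
  simp [idx, Fin.ext_iff]

lemma idx_ne_last {n : ℕ} (j : Fin n) : idx j ≠ Fin.last (n+1) := by
  simp [idx, Fin.ext_iff]; omega

lemma zero_ne_last (n : ℕ) : (0 : Fin (n+2)) ≠ Fin.last (n+1) := by
  simp [Fin.ext_iff]

lemma idx_inj {n : ℕ} {i j : Fin n} : idx i = idx j ↔ i = j := by
  simp [idx, Fin.ext_iff]

lemma fin_cases3 {n : ℕ} {P : Fin (n+2) → Prop} (h0 : P 0) (hL : P (Fin.last (n+1)))
    (hm : ∀ j : Fin n, P (idx j)) : ∀ i, P i := by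
  intro i
  induction i using Fin.cases with
  | zero => exact h0
  | succ k =>
    induction k using Fin.lastCases with
    | last => exact hL
    | cast j => rw [Fin.succ_castSucc]; exact hm j

lemma sum_split {n : ℕ} {M : Type*} [AddCommMonoid M] (f : Fin (n+2) → M) :
    ∑ k, f k = f 0 + (∑ j, f (idx j)) + f (Fin.last (n+1)) := by
  rw [Fin.sum_univ_succ, Fin.sum_univ_castSucc]
  simp only [idx, Fin.succ_castSucc]
  rw [Fin.succ_last]
  abel

/-- "Arrow" matrices: explicit parametrization of matrices by corner entries,
first/last row/column middles, and middle block. -/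
def toMat {n : ℕ} (a c d b : ℝ) (u v p q : Fin n → ℝ) (S : Fin n → Fin n → ℝ) :
    Matrix (Fin (n + 2)) (Fin (n + 2)) ℝ :=
  a • Matrix.single 0 0 1 + c • Matrix.single 0 (Fin.last (n+1)) 1
    + d • Matrix.single (Fin.last (n+1)) 0 1 + b • Matrix.single (Fin.last (n+1)) (Fin.last (n+1)) 1
    + ∑ j, u j • Matrix.single 0 (idx j) 1
    + ∑ j, v j • Matrix.single (idx j) 0 1
    + ∑ j, p j • Matrix.single (idx j) (Fin.last (n+1)) 1
    + ∑ j, q j • Matrix.single (Fin.last (n+1)) (idx j) 1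
    + ∑ i, ∑ j, S i j • Matrix.single (idx i) (idx j) 1

variable {n : ℕ} {a c d b : ℝ} {u v p q : Fin n → ℝ} {S : Fin n → Fin n → ℝ}


section apply
variable (a c d b u v p q S)

lemma toMat_apply_00 : toMat a c d b u v p q S 0 0 = a := by simp [toMat, Matrix.single, Matrix.sum_apply, Matrix.of_apply, Pi.smul_apply, smul_eq_mul,
    mul_one, Finset.sum_ite_eq, Finset.sum_ite_eq', idx_ne_zero, idx_ne_last, idx_inj,
    (idx_ne_zero _).symm, (idx_ne_last _).symm, zero_ne_last n, (zero_ne_last n).symm]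
lemma toMat_apply_0L : toMat a c d b u v p q S 0 (Fin.last (n+1)) = c := by simp [toMat, Matrix.single, Matrix.sum_apply, Matrix.of_apply, Pi.smul_apply, smul_eq_mul,
    mul_one, Finset.sum_ite_eq, Finset.sum_ite_eq', idx_ne_zero, idx_ne_last, idx_inj,
    (idx_ne_zero _).symm, (idx_ne_last _).symm, zero_ne_last n, (zero_ne_last n).symm]
lemma toMat_apply_L0 : toMat a c d b u v p q S (Fin.last (n+1)) 0 = d := by simp [toMat, Matrix.single, Matrix.sum_apply, Matrix.of_apply, Pi.smul_apply, smul_eq_mul,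
    mul_one, Finset.sum_ite_eq, Finset.sum_ite_eq', idx_ne_zero, idx_ne_last, idx_inj,
    (idx_ne_zero _).symm, (idx_ne_last _).symm, zero_ne_last n, (zero_ne_last n).symm]
lemma toMat_apply_LL : toMat a c d b u v p q S (Fin.last (n+1)) (Fin.last (n+1)) = b := by simp [toMat, Matrix.single, Matrix.sum_apply, Matrix.of_apply, Pi.smul_apply, smul_eq_mul,
    mul_one, Finset.sum_ite_eq, Finset.sum_ite_eq', idx_ne_zero, idx_ne_last, idx_inj,
    (idx_ne_zero _).symm, (idx_ne_last _).symm, zero_ne_last n, (zero_ne_last n).symm]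
lemma toMat_apply_0m (k : Fin n) : toMat a c d b u v p q S 0 (idx k) = u k := by simp [toMat, Matrix.single, Matrix.sum_apply, Matrix.of_apply, Pi.smul_apply, smul_eq_mul,
    mul_one, Finset.sum_ite_eq, Finset.sum_ite_eq', idx_ne_zero, idx_ne_last, idx_inj,
    (idx_ne_zero _).symm, (idx_ne_last _).symm, zero_ne_last n, (zero_ne_last n).symm]
lemma toMat_apply_m0 (k : Fin n) : toMat a c d b u v p q S (idx k) 0 = v k := by simp [toMat, Matrix.single, Matrix.sum_apply, Matrix.of_apply, Pi.smul_apply, smul_eq_mul,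
    mul_one, Finset.sum_ite_eq, Finset.sum_ite_eq', idx_ne_zero, idx_ne_last, idx_inj,
    (idx_ne_zero _).symm, (idx_ne_last _).symm, zero_ne_last n, (zero_ne_last n).symm]
lemma toMat_apply_mL (k : Fin n) : toMat a c d b u v p q S (idx k) (Fin.last (n+1)) = p k := by simp [toMat, Matrix.single, Matrix.sum_apply, Matrix.of_apply, Pi.smul_apply, smul_eq_mul,
    mul_one, Finset.sum_ite_eq, Finset.sum_ite_eq', idx_ne_zero, idx_ne_last, idx_inj,
    (idx_ne_zero _).symm, (idx_ne_last _).symm, zero_ne_last n, (zero_ne_last n).symm]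
lemma toMat_apply_Lm (k : Fin n) : toMat a c d b u v p q S (Fin.last (n+1)) (idx k) = q k := by simp [toMat, Matrix.single, Matrix.sum_apply, Matrix.of_apply, Pi.smul_apply, smul_eq_mul,
    mul_one, Finset.sum_ite_eq, Finset.sum_ite_eq', idx_ne_zero, idx_ne_last, idx_inj,
    (idx_ne_zero _).symm, (idx_ne_last _).symm, zero_ne_last n, (zero_ne_last n).symm]
lemma toMat_apply_mm (k l : Fin n) : toMat a c d b u v p q S (idx k) (idx l) = S k l := by
  rw [show S k l = ∑ x : Fin n, ∑ x' : Fin n, if x = k ∧ x' = l then S x x' else 0 by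
    simp [ite_and, Finset.sum_ite_eq]]
  simp [toMat, Matrix.single, Matrix.sum_apply, Matrix.of_apply, Pi.smul_apply, smul_eq_mul,
    mul_one, Finset.sum_ite_eq, Finset.sum_ite_eq', idx_ne_zero, idx_ne_last, idx_inj,
    (idx_ne_zero _).symm, (idx_ne_last _).symm, zero_ne_last n, (zero_ne_last n).symm]

end apply

lemma mat_ext {X Y : Matrix (Fin (n+2)) (Fin (n+2)) ℝ}
    (h00 : X 0 0 = Y 0 0) (h0L : X 0 (Fin.last (n+1)) = Y 0 (Fin.last (n+1)))
    (hL0 : X (Fin.last (n+1)) 0 = Y (Fin.last (n+1)) 0)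
    (hLL : X (Fin.last (n+1)) (Fin.last (n+1)) = Y (Fin.last (n+1)) (Fin.last (n+1)))
    (h0m : ∀ l, X 0 (idx l) = Y 0 (idx l)) (hLm : ∀ l, X (Fin.last (n+1)) (idx l) = Y (Fin.last (n+1)) (idx l))
    (hm0 : ∀ k, X (idx k) 0 = Y (idx k) 0) (hmL : ∀ k, X (idx k) (Fin.last (n+1)) = Y (idx k) (Fin.last (n+1)))
    (hmm : ∀ k l, X (idx k) (idx l) = Y (idx k) (idx l)) : X = Y :=
  Matrix.ext <| fin_cases3 (fin_cases3 h00 h0L h0m) (fin_cases3 hL0 hLL hLm)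
    (fun k => fin_cases3 (hm0 k) (hmL k) (fun l => hmm k l))

lemma toMat_mul {a₁ c₁ d₁ b₁ a₂ c₂ d₂ b₂ : ℝ} {u₁ v₁ p₁ q₁ u₂ v₂ p₂ q₂ : Fin n → ℝ}
    {S₁ S₂ : Fin n → Fin n → ℝ} :
    toMat a₁ c₁ d₁ b₁ u₁ v₁ p₁ q₁ S₁ * toMat a₂ c₂ d₂ b₂ u₂ v₂ p₂ q₂ S₂ =
      toMat (a₁*a₂ + c₁*d₂ + ∑ j, u₁ j * v₂ j) (a₁*c₂ + c₁*b₂ + ∑ j, u₁ j * p₂ j)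
        (d₁*a₂ + b₁*d₂ + ∑ j, q₁ j * v₂ j) (d₁*c₂ + b₁*b₂ + ∑ j, q₁ j * p₂ j)
        (fun j => a₁ * u₂ j + c₁ * q₂ j + ∑ i, u₁ i * S₂ i j)
        (fun i => v₁ i * a₂ + p₁ i * d₂ + ∑ j, S₁ i j * v₂ j)
        (fun i => v₁ i * c₂ + p₁ i * b₂ + ∑ j, S₁ i j * p₂ j)
        (fun j => d₁ * u₂ j + b₁ * q₂ j + ∑ i, q₁ i * S₂ i j)
        (fun i j => v₁ i * u₂ j + p₁ i * q₂ j + ∑ k, S₁ i k * S₂ k j) := by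
  apply mat_ext <;>
  · intros
    rw [Matrix.mul_apply, sum_split]
    simp only [toMat_apply_00, toMat_apply_0L, toMat_apply_L0, toMat_apply_LL, toMat_apply_0m,
      toMat_apply_m0, toMat_apply_mL, toMat_apply_Lm, toMat_apply_mm]
    ring

lemma toMat_add {a₁ c₁ d₁ b₁ a₂ c₂ d₂ b₂ : ℝ} {u₁ v₁ p₁ q₁ u₂ v₂ p₂ q₂ : Fin n → ℝ}
    {S₁ S₂ : Fin n → Fin n → ℝ} :
    toMat a₁ c₁ d₁ b₁ u₁ v₁ p₁ q₁ S₁ + toMat a₂ c₂ d₂ b₂ u₂ v₂ p₂ q₂ S₂ =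
      toMat (a₁+a₂) (c₁+c₂) (d₁+d₂) (b₁+b₂) (u₁+u₂) (v₁+v₂) (p₁+p₂) (q₁+q₂) (S₁+S₂) := by
  apply mat_ext <;>
  · intros
    simp only [Matrix.add_apply, toMat_apply_00, toMat_apply_0L, toMat_apply_L0, toMat_apply_LL,
      toMat_apply_0m, toMat_apply_m0, toMat_apply_mL, toMat_apply_Lm, toMat_apply_mm,
      Pi.add_apply]

lemma toMat_smul {t : ℝ} {a c d b : ℝ} {u v p q : Fin n → ℝ} {S : Fin n → Fin n → ℝ} :
    t • toMat a c d b u v p q S =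
      toMat (t*a) (t*c) (t*d) (t*b) (t • u) (t • v) (t • p) (t • q) (t • S) := by
  apply mat_ext <;>
  · intros
    simp only [Matrix.smul_apply, toMat_apply_00, toMat_apply_0L, toMat_apply_L0, toMat_apply_LL,
      toMat_apply_0m, toMat_apply_m0, toMat_apply_mL, toMat_apply_Lm, toMat_apply_mm,
      Pi.smul_apply, smul_eq_mul]

lemma toMat_congr {a₁ c₁ d₁ b₁ a₂ c₂ d₂ b₂ : ℝ} {u₁ v₁ p₁ q₁ u₂ v₂ p₂ q₂ : Fin n → ℝ}
    {S₁ S₂ : Fin n → Fin n → ℝ} (ha : a₁ = a₂) (hc : c₁ = c₂) (hd : d₁ = d₂) (hb : b₁ = b₂)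
    (hu : ∀ j, u₁ j = u₂ j) (hv : ∀ j, v₁ j = v₂ j) (hp : ∀ j, p₁ j = p₂ j) (hq : ∀ j, q₁ j = q₂ j)
    (hS : ∀ i j, S₁ i j = S₂ i j) :
    toMat a₁ c₁ d₁ b₁ u₁ v₁ p₁ q₁ S₁ = toMat a₂ c₂ d₂ b₂ u₂ v₂ p₂ q₂ S₂ := by
  have hu' : u₁ = u₂ := funext hu
  have hv' : v₁ = v₂ := funext hv
  have hp' : p₁ = p₂ := funext hp
  have hq' : q₁ = q₂ := funext hq
  have hS' : S₁ = S₂ := funext fun i => funext (hS i)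
  rw [ha, hc, hd, hb, hu', hv', hp', hq', hS']

lemma diagonal_toMat (f : Fin (n+2) → ℝ) :
    diagonal f = toMat (f 0) 0 0 (f (Fin.last (n+1))) 0 0 0 0
      (fun i j => if i = j then f (idx i) else 0) := by
  apply mat_ext <;>
  · intros
    simp [diagonal_apply, toMat_apply_00, toMat_apply_0L, toMat_apply_L0, toMat_apply_LL,
      toMat_apply_0m, toMat_apply_m0, toMat_apply_mL, toMat_apply_Lm, toMat_apply_mm,
      idx_ne_zero, idx_ne_last, idx_inj, (idx_ne_zero _).symm, (idx_ne_last _).symm,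
      zero_ne_last n, (zero_ne_last n).symm]

lemma one_toMat : (1 : Matrix (Fin (n+2)) (Fin (n+2)) ℝ) =
    toMat 1 0 0 1 0 0 0 0 (fun i j => if i = j then 1 else 0) := by
  rw [← diagonal_one, diagonal_toMat]

lemma zero_toMat : (0 : Matrix (Fin (n+2)) (Fin (n+2)) ℝ) = toMat 0 0 0 0 0 0 0 0 0 := by
  apply mat_ext <;>
  · intros
    simp only [Matrix.zero_apply, toMat_apply_00, toMat_apply_0L, toMat_apply_L0, toMat_apply_LL,
      toMat_apply_0m, toMat_apply_m0, toMat_apply_mL, toMat_apply_Lm, toMat_apply_mm,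
      Pi.zero_apply]

lemma exp_of_cube_eq_zero {N : ℕ} (A : Matrix (Fin N) (Fin N) ℝ) (h : A ^ 3 = 0) :
    NormedSpace.exp A = 1 + A + (2⁻¹ : ℝ) • (A * A) := by
  letI : SeminormedRing (Matrix (Fin N) (Fin N) ℝ) := Matrix.linftyOpSemiNormedRing
  letI : NormedRing (Matrix (Fin N) (Fin N) ℝ) := Matrix.linftyOpNormedRing
  letI : NormedAlgebra ℝ (Matrix (Fin N) (Fin N) ℝ) := Matrix.linftyOpNormedAlgebra
  rw [NormedSpace.exp_eq_tsum (𝕂 := ℝ)]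
  rw [show (fun x : Matrix (Fin N) (Fin N) ℝ => ∑' n : ℕ, (n.factorial : ℝ)⁻¹ • x ^ n) A = ∑' n : ℕ, (n.factorial : ℝ)⁻¹ • A ^ n from rfl]
  rw [tsum_eq_sum (s := Finset.range 3)]
  · rw [Finset.sum_range_succ, Finset.sum_range_succ, Finset.sum_range_succ, Finset.sum_range_zero]
    norm_num [pow_succ]
  · intro k hk
    have h3 : 3 ≤ k := by simpa using hk
    have : A ^ k = 0 := by
      rw [show k = 3 + (k - 3) by omega, pow_add, h, zero_mul]
    simp [this]

lemma NbarMat_toMat (j : Fin n) :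
    NbarMat n j = toMat 0 0 0 0 (fun k => if k = j then 1 else 0) (fun k => if k = j then 1 else 0)
      (fun k => if k = j then 1 else 0) (fun k => if k = j then -1 else 0) 0 := by
  apply mat_ext <;>
  · intros
    simp [NbarMat, Matrix.single, toMat_apply_00, toMat_apply_0L, toMat_apply_L0, toMat_apply_LL,
      toMat_apply_0m, toMat_apply_m0, toMat_apply_mL, toMat_apply_Lm, toMat_apply_mm,
      idx_ne_zero, idx_ne_last, idx_inj, (idx_ne_zero _).symm, (idx_ne_last _).symm,
      zero_ne_last n, (zero_ne_last n).symm, eq_comm, apply_ite (α := ℝ) Neg.neg]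

lemma Nmat_toMat (j : Fin n) :
    Nmat n j = toMat 0 0 0 0 (fun k => if k = j then 1 else 0) (fun k => if k = j then 1 else 0)
      (fun k => if k = j then -1 else 0) (fun k => if k = j then 1 else 0) 0 := by
  apply mat_ext <;>
  · intros
    simp [Nmat, Matrix.single, toMat_apply_00, toMat_apply_0L, toMat_apply_L0, toMat_apply_LL,
      toMat_apply_0m, toMat_apply_m0, toMat_apply_mL, toMat_apply_Lm, toMat_apply_mm,
      idx_ne_zero, idx_ne_last, idx_inj, (idx_ne_zero _).symm, (idx_ne_last _).symm,
      zero_ne_last n, (zero_ne_last n).symm, eq_comm, apply_ite (α := ℝ) Neg.neg]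

lemma sum_smul_NbarMat (x : Fin n → ℝ) :
    ∑ j, x j • NbarMat n j = toMat 0 0 0 0 x x x (-x) 0 := by
  apply mat_ext <;>
  · intros
    simp [Matrix.sum_apply, NbarMat_toMat, toMat_smul, toMat_apply_00, toMat_apply_0L,
      toMat_apply_L0, toMat_apply_LL, toMat_apply_0m, toMat_apply_m0, toMat_apply_mL,
      toMat_apply_Lm, toMat_apply_mm, Finset.sum_ite_eq, mul_ite]

lemma sum_smul_Nmat (x : Fin n → ℝ) :
    ∑ j, x j • Nmat n j = toMat 0 0 0 0 x x (-x) x 0 := by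
  apply mat_ext <;>
  · intros
    simp [Matrix.sum_apply, Nmat_toMat, toMat_smul, toMat_apply_00, toMat_apply_0L,
      toMat_apply_L0, toMat_apply_LL, toMat_apply_0m, toMat_apply_m0, toMat_apply_mL,
      toMat_apply_Lm, toMat_apply_mm, Finset.sum_ite_eq, mul_ite]

def dl (n : ℕ) : Fin n → Fin n → ℝ := fun i j => if i = j then 1 else 0

lemma nbarGrp_toMat (x : Fin n → ℝ) :
    nbarGrp n x = toMat (1 + (∑ i, x i * x i)/2) ((∑ i, x i * x i)/2) (-((∑ i, x i * x i)/2))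
      (1 - (∑ i, x i * x i)/2) x x x (-x) (dl n) := by
  set σ := ∑ i, x i * x i with hσ
  have hA : ∑ j, x j • NbarMat n j = toMat 0 0 0 0 x x x (-x) 0 := sum_smul_NbarMat x
  have hA2 : toMat 0 0 0 0 x x x (-x) (0 : Fin n → Fin n → ℝ) * toMat 0 0 0 0 x x x (-x) 0
      = toMat σ σ (-σ) (-σ) 0 0 0 0 0 := by
    rw [toMat_mul]
    apply toMat_congr <;> intros <;>
      simp [hσ, Finset.sum_neg_distrib, neg_mul, mul_neg] <;> ring
  have hA3 : (∑ j, x j • NbarMat n j) ^ 3 = 0 := by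
    rw [pow_succ, sq, hA, hA2, toMat_mul, zero_toMat]
    apply toMat_congr <;> intros <;> simp <;> ring
  rw [nbarGrp, exp_of_cube_eq_zero _ hA3, hA, hA2, one_toMat, toMat_smul, toMat_add, toMat_add]
  apply toMat_congr <;> intros <;> simp [dl] <;> ring

lemma nGrp_toMat (x : Fin n → ℝ) :
    nGrp n x = toMat (1 + (∑ i, x i * x i)/2) (-((∑ i, x i * x i)/2)) ((∑ i, x i * x i)/2)
      (1 - (∑ i, x i * x i)/2) x x (-x) x (dl n) := by
  set σ := ∑ i, x i * x i with hσ
  have hA : ∑ j, x j • Nmat n j = toMat 0 0 0 0 x x (-x) x 0 := sum_smul_Nmat x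
  have hA2 : toMat 0 0 0 0 x x (-x) x (0 : Fin n → Fin n → ℝ) * toMat 0 0 0 0 x x (-x) x 0
      = toMat σ (-σ) σ (-σ) 0 0 0 0 0 := by
    rw [toMat_mul]
    apply toMat_congr <;> intros <;>
      simp [hσ, Finset.sum_neg_distrib, neg_mul, mul_neg] <;> ring
  have hA3 : (∑ j, x j • Nmat n j) ^ 3 = 0 := by
    rw [pow_succ, sq, hA, hA2, toMat_mul, zero_toMat]
    apply toMat_congr <;> intros <;> simp <;> ring
  rw [nGrp, exp_of_cube_eq_zero _ hA3, hA, hA2, one_toMat, toMat_smul, toMat_add, toMat_add]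
  apply toMat_congr <;> intros <;> simp [dl] <;> ring

def cMat (n : ℕ) : Matrix (Fin (n + 2)) (Fin (n + 2)) ℝ := toMat 1 1 1 (-1) 0 0 0 0 (dl n)

def cMat' (n : ℕ) : Matrix (Fin (n + 2)) (Fin (n + 2)) ℝ :=
  toMat 2⁻¹ 2⁻¹ 2⁻¹ (-2⁻¹) 0 0 0 0 (dl n)

lemma dl_mul (i j : Fin n) : ∑ k, dl n i k * dl n k j = dl n i j := by
  simp [dl, ite_and, Finset.sum_ite_eq]

lemma cMat_mul_cMat' : cMat n * cMat' n = 1 := by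
  rw [cMat, cMat', toMat_mul, one_toMat]
  apply toMat_congr <;> intros <;> simp [dl_mul, dl] <;> ring

lemma cMat'_mul_cMat : cMat' n * cMat n = 1 := by
  rw [cMat, cMat', toMat_mul, one_toMat]
  apply toMat_congr <;> intros <;> simp [dl_mul, dl] <;> ring

lemma smul_Hmat_toMat (t : ℝ) : t • Hmat n = toMat 0 (2*t) (2*t) 0 0 0 0 0 0 := by
  apply mat_ext <;>
  · intros
    simp [Hmat, Matrix.single, toMat_apply_00, toMat_apply_0L, toMat_apply_L0, toMat_apply_LL,
      toMat_apply_0m, toMat_apply_m0, toMat_apply_mL, toMat_apply_Lm, toMat_apply_mm,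
      idx_ne_zero, idx_ne_last, idx_inj, (idx_ne_zero _).symm, (idx_ne_last _).symm,
      zero_ne_last n, (zero_ne_last n).symm, mul_comm]

lemma exp_smul_Hmat (t : ℝ) :
    NormedSpace.exp (t • Hmat n) =
      toMat ((Real.exp (2*t) + Real.exp (-(2*t)))/2) ((Real.exp (2*t) - Real.exp (-(2*t)))/2)
        ((Real.exp (2*t) - Real.exp (-(2*t)))/2) ((Real.exp (2*t) + Real.exp (-(2*t)))/2)
        0 0 0 0 (dl n) := by
  have hunit : IsUnit (cMat n) := by
    exact ⟨⟨cMat n, cMat' n, cMat_mul_cMat', cMat'_mul_cMat⟩, rfl⟩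
  have hinv : (cMat n)⁻¹ = cMat' n := Matrix.inv_eq_right_inv cMat_mul_cMat'
  set f : Fin (n+2) → ℝ := fun i => if i = 0 then 2*t else if i = Fin.last (n+1) then -(2*t) else 0
    with hf
  have hdiag : t • Hmat n = cMat n * diagonal f * (cMat n)⁻¹ := by
    rw [hinv, smul_Hmat_toMat, diagonal_toMat, cMat, cMat', toMat_mul, toMat_mul]
    apply toMat_congr <;> intros <;>
      simp [hf, idx_ne_zero, idx_ne_last, zero_ne_last n, (zero_ne_last n).symm, dl,
        Finset.sum_ite_eq', ite_and, mul_ite, ite_mul] <;> ring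
  rw [hdiag, Matrix.exp_conj _ _ hunit, Matrix.exp_diagonal, hinv, diagonal_toMat, cMat, cMat',
    toMat_mul, toMat_mul]
  apply toMat_congr <;> intros <;>
    simp [hf, Pi.coe_exp, idx_ne_zero, idx_ne_last, zero_ne_last n, (zero_ne_last n).symm, dl,
      Finset.sum_ite_eq', ite_and, mul_ite, ite_mul, ← Real.exp_eq_exp_ℝ, apply_ite Real.exp,
      Real.exp_zero] <;> ring

lemma w0_toMat : w0 n = toMat (-1) 0 0 1 0 0 0 0 (dl n) := by
  rw [w0, diagonal_toMat]
  apply toMat_congr <;> intros <;>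
    simp [dl, idx_ne_zero, (zero_ne_last n).symm, eq_comm]

lemma w0_inv : (w0 n)⁻¹ = w0 n := by
  apply Matrix.inv_eq_right_inv
  rw [w0_toMat, toMat_mul, one_toMat]
  apply toMat_congr <;> intros <;> simp [dl_mul, dl] <;> ring

lemma mMat_toMat (x : Fin n → ℝ) :
    mMat n x = toMat (-1) 0 0 (-1) 0 0 0 0
      (fun i j => dl n i j - 2 * (eunorm x ^ 2)⁻¹ * x i * x j) := by
  rw [mMat, one_toMat]
  apply mat_ext <;>
  · intros
    simp [dl, Matrix.single, Matrix.sum_apply, toMat_apply_00, toMat_apply_0L, toMat_apply_L0,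
      toMat_apply_LL, toMat_apply_0m, toMat_apply_m0, toMat_apply_mL, toMat_apply_Lm,
      toMat_apply_mm, idx_ne_zero, idx_ne_last, idx_inj, (idx_ne_zero _).symm,
      (idx_ne_last _).symm, zero_ne_last n, (zero_ne_last n).symm, ite_and, Finset.sum_ite_eq,
      Finset.sum_ite_eq', mul_ite, ite_mul] <;> norm_num

lemma sum_smul_sq (c : ℝ) (x : Fin n → ℝ) :
    ∑ i, (c • x) i * (c • x) i = c^2 * ∑ i, x i * x i := by
  rw [Finset.mul_sum]
  exact Finset.sum_congr rfl fun i _ => by simp; ring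

lemma sum_dl_mul (f : Fin n → ℝ) (i : Fin n) : ∑ k, dl n i k * f k = f i := by
  simp [dl, ite_mul, Finset.sum_ite_eq]

lemma sum_mul_dl (f : Fin n → ℝ) (j : Fin n) : ∑ k, f k * dl n k j = f j := by
  simp [dl, mul_ite, Finset.sum_ite_eq']

lemma dot_cc (c d : ℝ) (x : Fin n → ℝ) :
    ∑ i, (c * x i) * (d * x i) = (c * d) * ∑ i, x i * x i := by
  rw [Finset.mul_sum]
  exact Finset.sum_congr rfl fun i _ => by ring

variable {x : Fin n → ℝ}

lemma D3lem {σ : ℝ} (hσdef : σ = ∑ i, x i * x i) (hσ0 : σ ≠ 0) (c : ℝ) (j : Fin n) :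
    ∑ i, (c * x i) * (dl n i j - 2*σ⁻¹*(x i*x j)) = -(c * x j) := by
  calc ∑ i, (c * x i) * (dl n i j - 2*σ⁻¹*(x i*x j))
      = (∑ i, (fun k => c * x k) i * dl n i j) - (∑ i, x i * x i) * (2*σ⁻¹*(c*x j)) := by
        rw [Finset.sum_mul, ← Finset.sum_sub_distrib]
        exact Finset.sum_congr rfl fun i _ => by ring
    _ = -(c * x j) := by rw [sum_mul_dl, ← hσdef]; field_simp; ring

lemma D4lem {σ : ℝ} (hσdef : σ = ∑ i, x i * x i) (hσ0 : σ ≠ 0) (c : ℝ) (i : Fin n) :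
    ∑ j, (dl n i j - 2*σ⁻¹*(x i*x j)) * (c * x j) = -(c * x i) := by
  calc ∑ j, (dl n i j - 2*σ⁻¹*(x i*x j)) * (c * x j)
      = (∑ j, dl n i j * (fun k => c * x k) j) - (∑ j, x j * x j) * (2*σ⁻¹*(c*x i)) := by
        rw [Finset.sum_mul, ← Finset.sum_sub_distrib]
        exact Finset.sum_congr rfl fun j _ => by ring
    _ = -(c * x i) := by rw [sum_dl_mul, ← hσdef]; field_simp; ring

lemma lemP3 {σ : ℝ} (hσdef : σ = ∑ i, x i * x i) (hσ0 : σ ≠ 0) :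
    toMat (-(σ+σ⁻¹)/2 - 1/2) (-(σ-σ⁻¹)/2 - 1/2) (-(σ-σ⁻¹)/2 + 1/2) (-(σ+σ⁻¹)/2 + 1/2)
        (fun i => σ⁻¹ * x i) x x (fun i => -σ⁻¹ * x i) (fun i j => dl n i j - 2*σ⁻¹*(x i*x j)) *
      toMat (1+σ⁻¹/2) (-(σ⁻¹/2)) (σ⁻¹/2) (1-σ⁻¹/2) (fun i => σ⁻¹ * x i) (fun i => σ⁻¹ * x i)
        (fun i => -σ⁻¹ * x i) (fun i => σ⁻¹ * x i) (dl n) =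
      toMat (-1-σ/2) (-(σ/2)) (-(σ/2)) (1-σ/2) (fun i => -(x i)) x x (fun i => -(x i)) (dl n) := by
  rw [toMat_mul]
  apply toMat_congr <;> intros <;>
    simp only [Pi.zero_apply, mul_zero, zero_mul, add_zero, zero_add, neg_zero,
      Finset.sum_const_zero, sum_dl_mul, sum_mul_dl, D3lem hσdef hσ0, D4lem hσdef hσ0,
      dot_cc, ← hσdef] <;>
    field_simp <;> ring

lemma lemL : toMat (-1) 0 0 1 0 0 0 0 (dl n) *
    toMat (1+σ'/2) (σ'/2) (-(σ'/2)) (1-σ'/2) x x x (fun i => -(x i)) (dl n) =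
    toMat (-1-σ'/2) (-(σ'/2)) (-(σ'/2)) (1-σ'/2) (fun i => -(x i)) x x (fun i => -(x i)) (dl n) := by
  rw [toMat_mul]
  apply toMat_congr <;> intros <;>
    simp only [Pi.zero_apply, mul_zero, zero_mul, add_zero, zero_add, neg_zero,
      Finset.sum_const_zero, sum_dl_mul, sum_mul_dl] <;> ring

lemma lemP1 {σ : ℝ} (hσdef : σ = ∑ i, x i * x i) (hσ0 : σ ≠ 0) :
    toMat (1+σ⁻¹/2) (σ⁻¹/2) (-(σ⁻¹/2)) (1-σ⁻¹/2) (fun i => -σ⁻¹ * x i)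
        (fun i => -σ⁻¹ * x i) (fun i => -σ⁻¹ * x i) (fun i => σ⁻¹ * x i) (dl n) *
      toMat (-1) 0 0 (-1) 0 0 0 0 (fun i j => dl n i j - 2*σ⁻¹*(x i*x j)) =
      toMat (-1-σ⁻¹/2) (-(σ⁻¹/2)) (σ⁻¹/2) (-1+σ⁻¹/2) (fun i => σ⁻¹ * x i) (fun i => σ⁻¹ * x i)
        (fun i => σ⁻¹ * x i) (fun i => -σ⁻¹ * x i) (fun i j => dl n i j - 2*σ⁻¹*(x i*x j)) := by
  rw [toMat_mul]
  apply toMat_congr <;> intros <;>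
    simp only [Pi.zero_apply, mul_zero, zero_mul, add_zero, zero_add, neg_zero,
      Finset.sum_const_zero, sum_dl_mul, sum_mul_dl, D3lem hσdef hσ0, D4lem hσdef hσ0] <;>
    ring

lemma lemP2 {σ : ℝ} (hσdef : σ = ∑ i, x i * x i) (hσ0 : σ ≠ 0) :
    toMat (-1-σ⁻¹/2) (-(σ⁻¹/2)) (σ⁻¹/2) (-1+σ⁻¹/2) (fun i => σ⁻¹ * x i) (fun i => σ⁻¹ * x i)
        (fun i => σ⁻¹ * x i) (fun i => -σ⁻¹ * x i) (fun i j => dl n i j - 2*σ⁻¹*(x i*x j)) *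
      toMat ((σ + σ⁻¹)/2) ((σ - σ⁻¹)/2) ((σ - σ⁻¹)/2) ((σ + σ⁻¹)/2) 0 0 0 0 (dl n) =
      toMat (-(σ+σ⁻¹)/2 - 1/2) (-(σ-σ⁻¹)/2 - 1/2) (-(σ-σ⁻¹)/2 + 1/2) (-(σ+σ⁻¹)/2 + 1/2)
        (fun i => σ⁻¹ * x i) x x (fun i => -σ⁻¹ * x i)
        (fun i j => dl n i j - 2*σ⁻¹*(x i*x j)) := by
  rw [toMat_mul]
  apply toMat_congr <;> intros <;>
    simp only [Pi.zero_apply, mul_zero, zero_mul, add_zero, zero_add, neg_zero,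
      Finset.sum_const_zero, sum_dl_mul, sum_mul_dl, D3lem hσdef hσ0, D4lem hσdef hσ0] <;>
    field_simp <;> ring

lemma lemY {σ : ℝ} (hσdef : σ = ∑ i, x i * x i) (hσ0 : σ ≠ 0) :
    nbarGrp n (-σ⁻¹ • x) =
      toMat (1+σ⁻¹/2) (σ⁻¹/2) (-(σ⁻¹/2)) (1-σ⁻¹/2) (fun i => -σ⁻¹ * x i) (fun i => -σ⁻¹ * x i)
        (fun i => -σ⁻¹ * x i) (fun i => σ⁻¹ * x i) (dl n) := by
  rw [nbarGrp_toMat, sum_smul_sq, ← hσdef]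
  apply toMat_congr <;> intros <;> simp <;> field_simp <;> ring

lemma lemZ {σ : ℝ} (hσdef : σ = ∑ i, x i * x i) (hσ0 : σ ≠ 0) :
    nGrp n (σ⁻¹ • x) =
      toMat (1+σ⁻¹/2) (-(σ⁻¹/2)) (σ⁻¹/2) (1-σ⁻¹/2) (fun i => σ⁻¹ * x i) (fun i => σ⁻¹ * x i)
        (fun i => -σ⁻¹ * x i) (fun i => σ⁻¹ * x i) (dl n) := by
  rw [nGrp_toMat, sum_smul_sq, ← hσdef]
  apply toMat_congr <;> intros <;> simp <;> field_simp <;> ring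

lemma lemX : nbarGrp n x =
    toMat (1+(∑ i, x i * x i)/2) ((∑ i, x i * x i)/2) (-((∑ i, x i * x i)/2))
      (1-(∑ i, x i * x i)/2) x x x (fun i => -(x i)) (dl n) := by
  rw [nbarGrp_toMat]
  apply toMat_congr <;> intros <;> simp

lemma lemM {σ : ℝ} (hσdef : σ = ∑ i, x i * x i) (he : eunorm x ^ 2 = σ) :
    mMat n x = toMat (-1) 0 0 (-1) 0 0 0 0
      (fun i j => dl n i j - 2*σ⁻¹*(x i*x j)) := by
  rw [mMat_toMat, he]
  apply toMat_congr <;> intros <;> simp <;> ring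


/-- the Bruhat-type decomposition `w₀⁻¹ n̄_x = n̄_y m e^{log|x|·H} n_z`
with `y = −|x|⁻²x`, `z = |x|⁻²x`. -/
theorem stmt0 (n : ℕ) (hn : 1 ≤ n) (x : Fin n → ℝ) (hx : x ≠ 0) :
    (w0 n)⁻¹ * nbarGrp n x =
      nbarGrp n (-(eunorm x ^ 2)⁻¹ • x) * mMat n x *
        NormedSpace.exp (Real.log (eunorm x) • Hmat n) *
        nGrp n ((eunorm x ^ 2)⁻¹ • x) := by
  have hσpos : 0 < ∑ i, x i * x i := by
    obtain ⟨i, hi⟩ := Function.ne_iff.mp hx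
    exact Finset.sum_pos' (fun j _ => mul_self_nonneg _)
      ⟨i, Finset.mem_univ i, mul_self_pos.mpr hi⟩
  have hσ0 : (∑ i, x i * x i) ≠ 0 := ne_of_gt hσpos
  have he : eunorm x ^ 2 = ∑ i, x i * x i := by
    rw [eunorm, Real.sq_sqrt (by positivity)]
    exact Finset.sum_congr rfl fun i _ => sq (x i)
  have hr : 0 < eunorm x := by
    rw [eunorm]
    apply Real.sqrt_pos.mpr
    rw [show ∑ i, x i ^ 2 = ∑ i, x i * x i from Finset.sum_congr rfl fun i _ => sq (x i)]
    exact hσpos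
  have hexp1 : Real.exp (2 * Real.log (eunorm x)) = ∑ i, x i * x i := by
    rw [two_mul, Real.exp_add, Real.exp_log hr, ← he, sq]
  have hexp2 : Real.exp (-(2 * Real.log (eunorm x))) = (∑ i, x i * x i)⁻¹ := by
    rw [Real.exp_neg, hexp1]
  have hE : NormedSpace.exp (Real.log (eunorm x) • Hmat n) =
      toMat (((∑ i, x i * x i) + (∑ i, x i * x i)⁻¹)/2)
        (((∑ i, x i * x i) - (∑ i, x i * x i)⁻¹)/2)
        (((∑ i, x i * x i) - (∑ i, x i * x i)⁻¹)/2)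
        (((∑ i, x i * x i) + (∑ i, x i * x i)⁻¹)/2) 0 0 0 0 (dl n) := by
    rw [exp_smul_Hmat, hexp1, hexp2]
  rw [w0_inv, w0_toMat, he, lemX, lemY rfl hσ0, lemZ rfl hσ0, lemM rfl he, hE,
    lemL, lemP1 rfl hσ0, lemP2 rfl hσ0, lemP3 rfl hσ0]
end
end

section
/- Let n ≥ 1 and x ∈ ℝ^n. The map φ : ℝ^n∖{0} → ℝ^n, φ(z) = x − |z|⁻²z, is differentiable, and for every z ≠ 0 the absolute value of the determinant of its derivative Dφ(z) equals |z|^{−2n}. -/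
/-- the map `φ(z) = x − |z|⁻²z` is differentiable away from `0` and the absolute
value of the determinant of its derivative at `z ≠ 0` equals `|z|^{−2n}`. -/
theorem stmt1 (n : ℕ) (hn : 1 ≤ n) (x : EuclideanSpace ℝ (Fin n)) :
    ∀ z : EuclideanSpace ℝ (Fin n), z ≠ 0 →
      DifferentiableAt ℝ (fun z : EuclideanSpace ℝ (Fin n) => x - (‖z‖ ^ 2)⁻¹ • z) z ∧
      |LinearMap.det
          (fderiv ℝ (fun z : EuclideanSpace ℝ (Fin n) => x - (‖z‖ ^ 2)⁻¹ • z) z).toLinearMap| =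
        ‖z‖ ^ (-(2 * n : ℤ)) := by
  intro z hz
  have hnorm : (0:ℝ) < ‖z‖ := norm_pos_iff.2 hz
  have hinv := EuclideanGeometry.hasFDerivAt_inversion
    (c := (0 : EuclideanSpace ℝ (Fin n))) (R := 1) hz
  have hfun : (fun z : EuclideanSpace ℝ (Fin n) => x - (‖z‖ ^ 2)⁻¹ • z) =
      fun y => x - EuclideanGeometry.inversion (0 : EuclideanSpace ℝ (Fin n)) 1 y := by
    funext y
    simp [EuclideanGeometry.inversion_def, dist_eq_norm, one_div, inv_pow]
  have hφ' : HasFDerivAt (fun z : EuclideanSpace ℝ (Fin n) => x - (‖z‖ ^ 2)⁻¹ • z)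
      (-(((1:ℝ) / dist z 0) ^ 2 •
        ((ℝ ∙ (z - 0))ᗮ.reflection : EuclideanSpace ℝ (Fin n) →L[ℝ] EuclideanSpace ℝ (Fin n)))) z := by
    rw [hfun]
    exact hinv.const_sub x
  refine ⟨hφ'.differentiableAt, ?_⟩
  rw [hφ'.fderiv]
  have hdetR : LinearMap.det
      (((ℝ ∙ (z - 0))ᗮ.reflection : EuclideanSpace ℝ (Fin n) →L[ℝ] EuclideanSpace ℝ (Fin n)) :
        EuclideanSpace ℝ (Fin n) →ₗ[ℝ] EuclideanSpace ℝ (Fin n)) = -1 := by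
    rw [show (((ℝ ∙ (z - 0))ᗮ.reflection : EuclideanSpace ℝ (Fin n) →L[ℝ] EuclideanSpace ℝ (Fin n)) :
        EuclideanSpace ℝ (Fin n) →ₗ[ℝ] EuclideanSpace ℝ (Fin n)) =
        (ℝ ∙ (z - 0))ᗮ.reflection.toLinearMap from rfl, Submodule.det_reflection,
      Submodule.orthogonal_orthogonal, sub_zero, finrank_span_singleton hz, pow_one]
  set c : ℝ := ((1:ℝ) / dist z 0) ^ 2 with hc
  have hcpos : 0 < c := by
    have : dist z 0 ≠ 0 := by simpa [dist_eq_norm] using hnorm.ne'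
    positivity
  simp only [ContinuousLinearMap.coe_neg, ContinuousLinearMap.coe_smul, ← neg_smul]
  rw [LinearMap.det_smul, hdetR, finrank_euclideanSpace_fin]
  have hd : dist z 0 = ‖z‖ := by simp [dist_eq_norm]
  rw [abs_mul, abs_pow, abs_neg, abs_neg, abs_one, mul_one, abs_of_pos hcpos, hc, hd,
    one_div, inv_pow, inv_pow, ← pow_mul, ← zpow_natCast ‖z‖ (2 * n), ← zpow_neg]
  push_cast
  ring_nf
end

section
/- Let σ, μ ∈ ℂ and let u : (0,∞) → ℂ be twice differentiable. Set v(x) = u(sinh²(x/2)) and β(x) = ((μ−1)/2)·coth(x/2) − ((σ−1)/2)·tanh(x/2). Then for all x > 0: (𝒟_{σ,μ}u)(sinh²(x/2)) = v''(x) + β(x)·v'(x). -/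
private lemma hg_deriv (x : ℝ) :
    HasDerivAt (fun s : ℝ => Real.sinh (s / 2) ^ 2)
      (Real.sinh (x / 2) * Real.cosh (x / 2)) x := by
  have h1 : HasDerivAt (fun s : ℝ => Real.sinh (s / 2)) (Real.cosh (x / 2) * (1 / 2)) x := by
    have := (Real.hasDerivAt_sinh (x / 2)).comp x ((hasDerivAt_id x).div_const 2)
    simpa [Function.comp_def] using this
  have h2 := h1.fun_pow 2
  exact h2.congr_deriv (by ring)

private lemma hr_deriv (x : ℝ) :
    HasDerivAt (fun s : ℝ => Real.sinh (s / 2) * Real.cosh (s / 2))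
      ((Real.cosh (x / 2) ^ 2 + Real.sinh (x / 2) ^ 2) / 2) x := by
  have h1 : HasDerivAt (fun s : ℝ => Real.sinh (s / 2)) (Real.cosh (x / 2) * (1 / 2)) x := by
    have := (Real.hasDerivAt_sinh (x / 2)).comp x ((hasDerivAt_id x).div_const 2)
    simpa [Function.comp_def] using this
  have h2 : HasDerivAt (fun s : ℝ => Real.cosh (s / 2)) (Real.sinh (x / 2) * (1 / 2)) x := by
    have := (Real.hasDerivAt_cosh (x / 2)).comp x ((hasDerivAt_id x).div_const 2)
    simpa [Function.comp_def] using this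
  have h3 := h1.fun_mul h2
  exact h3.congr_deriv (by ring)

/-- under the substitution `t = sinh²(x/2)`, the operator
`𝒟_{σ,μ}u(t) = t(1+t)u'' + (((μ−σ+2)/2)t + μ/2)u'` becomes `v'' + β v'` with
`v(x) = u(sinh²(x/2))` and `β(x) = ((μ−1)/2)coth(x/2) − ((σ−1)/2)tanh(x/2)`. -/
theorem stmt6 (σ μ : ℂ) (u : ℝ → ℂ)
    (hu : ∀ t : ℝ, 0 < t → DifferentiableAt ℝ u t ∧ DifferentiableAt ℝ (deriv u) t) :
    ∀ x : ℝ, 0 < x →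
      ((Real.sinh (x / 2) ^ 2 : ℝ) : ℂ) * (1 + ((Real.sinh (x / 2) ^ 2 : ℝ) : ℂ)) *
          deriv (deriv u) (Real.sinh (x / 2) ^ 2) +
        ((μ - σ + 2) / 2 * ((Real.sinh (x / 2) ^ 2 : ℝ) : ℂ) + μ / 2) *
          deriv u (Real.sinh (x / 2) ^ 2) =
      deriv (deriv (fun s : ℝ => u (Real.sinh (s / 2) ^ 2))) x +
        (((μ - 1) / 2) * ((Real.tanh (x / 2) : ℝ) : ℂ)⁻¹ -
            ((σ - 1) / 2) * ((Real.tanh (x / 2) : ℝ) : ℂ)) *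
          deriv (fun s : ℝ => u (Real.sinh (s / 2) ^ 2)) x := by
  intro x hx
  have hpos : ∀ s : ℝ, 0 < s → 0 < Real.sinh (s / 2) ^ 2 := by
    intro s hs
    have h : 0 < Real.sinh (s / 2) := Real.sinh_pos_iff.2 (by linarith)
    positivity
  -- first derivative of v at every s > 0
  have hv : ∀ s : ℝ, 0 < s →
      HasDerivAt (fun s : ℝ => u (Real.sinh (s / 2) ^ 2))
        ((Real.sinh (s / 2) * Real.cosh (s / 2)) • deriv u (Real.sinh (s / 2) ^ 2)) s := by
    intro s hs
    exact HasDerivAt.scomp s ((hu _ (hpos s hs)).1.hasDerivAt) (hg_deriv s)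
  have hveq : deriv (fun s : ℝ => u (Real.sinh (s / 2) ^ 2)) =ᶠ[nhds x]
      fun s => (Real.sinh (s / 2) * Real.cosh (s / 2)) • deriv u (Real.sinh (s / 2) ^ 2) := by
    filter_upwards [eventually_gt_nhds hx] with s hs
    exact (hv s hs).deriv
  -- second derivative
  have hA : HasDerivAt (fun s : ℝ => ((Real.sinh (s / 2) * Real.cosh (s / 2) : ℝ) : ℂ))
      (((Real.cosh (x / 2) ^ 2 + Real.sinh (x / 2) ^ 2) / 2 : ℝ) : ℂ) x :=
    (hr_deriv x).ofReal_comp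
  have hB : HasDerivAt (fun s : ℝ => deriv u (Real.sinh (s / 2) ^ 2))
      ((Real.sinh (x / 2) * Real.cosh (x / 2)) • deriv (deriv u) (Real.sinh (x / 2) ^ 2)) x :=
    HasDerivAt.scomp (g₁ := deriv u) x ((hu _ (hpos x hx)).2.hasDerivAt) (hg_deriv x)
  have hw : HasDerivAt
      (fun s => (Real.sinh (s / 2) * Real.cosh (s / 2)) • deriv u (Real.sinh (s / 2) ^ 2))
      ((((Real.cosh (x / 2) ^ 2 + Real.sinh (x / 2) ^ 2) / 2 : ℝ) : ℂ) *
          deriv u (Real.sinh (x / 2) ^ 2) +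
        ((Real.sinh (x / 2) * Real.cosh (x / 2) : ℝ) : ℂ) *
          ((Real.sinh (x / 2) * Real.cosh (x / 2)) • deriv (deriv u) (Real.sinh (x / 2) ^ 2))) x := by
    have := hA.fun_mul hB
    simp only [Complex.real_smul] at this ⊢
    convert this using 1
  have hdd : deriv (deriv (fun s : ℝ => u (Real.sinh (s / 2) ^ 2))) x =
      (((Real.cosh (x / 2) ^ 2 + Real.sinh (x / 2) ^ 2) / 2 : ℝ) : ℂ) *
          deriv u (Real.sinh (x / 2) ^ 2) +
        ((Real.sinh (x / 2) * Real.cosh (x / 2) : ℝ) : ℂ) *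
          ((Real.sinh (x / 2) * Real.cosh (x / 2)) • deriv (deriv u) (Real.sinh (x / 2) ^ 2)) := by
    rw [hveq.deriv_eq]
    exact hw.deriv
  rw [hdd, (hv x hx).deriv]
  -- now pure algebra
  set S := Real.sinh (x / 2) with hS
  set C := Real.cosh (x / 2) with hC
  have hSpos : 0 < S := Real.sinh_pos_iff.2 (by linarith)
  have hCpos : 0 < C := Real.cosh_pos _
  have hS0 : (S : ℂ) ≠ 0 := by exact_mod_cast hSpos.ne'
  have hC0 : (C : ℂ) ≠ 0 := by exact_mod_cast hCpos.ne'
  have hC2 : (C : ℂ) ^ 2 = (S : ℂ) ^ 2 + 1 := by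
    have := Real.cosh_sq (x / 2)
    rw [← hS, ← hC] at this
    exact_mod_cast this
  rw [Real.tanh_eq_sinh_div_cosh, ← hS, ← hC]
  simp only [Complex.real_smul]
  push_cast
  field_simp
  ring_nf
  linear_combination (-(μ * deriv u (S ^ 2)) -
    deriv (deriv u) (S ^ 2) * (2 * (S:ℂ) ^ 2)) * hC2
end

section
/- Let n ≥ 1, let d ∈ ℕ with 2d+n−2 ≠ 0, let 1 ≤ j ≤ n, and let p be a harmonic polynomial on ℝ^n homogeneous of degree d. Then x_j·p(x) = p_j⁺(x) + |x|²·p_j⁻(x) for all x, where p_j⁺(x) = x_j p(x) − (|x|²/(2d+n−2)) ∂p/∂x_j(x) is a harmonic polynomial homogeneous of degree d+1 and p_j⁻(x) = (1/(2d+n−2)) ∂p/∂x_j(x) is a harmonic polynomial homogeneous of degree d−1 (the zero polynomial if d = 0). -/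
open MvPolynomial Finsupp

variable {n : ℕ}

lemma aux_pderiv_comm (i k : Fin n) (p : MvPolynomial (Fin n) ℝ) :
    pderiv i (pderiv k p) = pderiv k (pderiv i p) := by
  induction p using MvPolynomial.induction_on' with
  | monomial s a =>
    rcases eq_or_ne i k with rfl | h
    · rfl
    · simp only [pderiv_monomial]
      rw [tsub_right_comm]
      congr 1
      have h1 : ((s - Finsupp.single i 1 : Fin n →₀ ℕ)) k = s k := by
        simp [Finsupp.single_apply, h, h.symm]
      have h2 : ((s - Finsupp.single k 1 : Fin n →₀ ℕ)) i = s i := by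
        simp [Finsupp.single_apply, h, h.symm]
      rw [h1, h2]; ring
  | add p q hp hq => simp [hp, hq]

lemma aux_lap_pderiv (j : Fin n) (p : MvPolynomial (Fin n) ℝ)
    (h : (∑ i, pderiv i (pderiv i p)) = 0) :
    (∑ i, pderiv i (pderiv i (pderiv j p))) = 0 := by
  have : ∀ i : Fin n, pderiv i (pderiv i (pderiv j p)) = pderiv j (pderiv i (pderiv i p)) := by
    intro i
    rw [aux_pderiv_comm i j p, aux_pderiv_comm i j (pderiv i p)]
  simp only [this]
  rw [← map_sum, h, map_zero]

lemma aux_pderiv_homog {d : ℕ} (j : Fin n) {p : MvPolynomial (Fin n) ℝ}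
    (h : p.IsHomogeneous d) : (pderiv j p).IsHomogeneous (d - 1) := by
  conv_lhs => rw [← p.support_sum_monomial_coeff, map_sum]
  apply MvPolynomial.IsHomogeneous.sum
  intro s hs
  rw [pderiv_monomial]
  rcases Nat.eq_zero_or_pos (s j) with h0 | h0
  · simp only [h0, Nat.cast_zero, mul_zero, monomial_zero]
    exact isHomogeneous_zero _ _ _
  · apply isHomogeneous_monomial
    have hdeg : s.degree = d := by
      rw [Finsupp.degree_eq_weight_one]; exact h (MvPolynomial.mem_support_iff.mp hs)
    have hle : Finsupp.single j 1 ≤ s := Finsupp.single_le_iff.mpr h0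
    have hsplit : (s - Finsupp.single j 1 : Fin n →₀ ℕ) + Finsupp.single j 1 = s :=
      tsub_add_cancel_of_le hle
    have hw : (s - Finsupp.single j 1 : Fin n →₀ ℕ).degree + 1 = s.degree := by
      rw [Finsupp.degree_eq_weight_one, ← hsplit, map_add]
      simp [Finsupp.weight_apply, Finsupp.sum_single_index]
    omega

lemma aux_degree_sum (s : Fin n →₀ ℕ) : s.degree = ∑ i, s i := by
  rw [Finsupp.degree]
  exact Finset.sum_subset (Finset.subset_univ _)
    (fun i _ hi => Finsupp.notMem_support_iff.mp hi)

lemma aux_euler {d : ℕ} {p : MvPolynomial (Fin n) ℝ} (h : p.IsHomogeneous d) :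
    ∑ i, X i * pderiv i p = C (d : ℝ) * p := by
  conv_lhs => rw [← p.support_sum_monomial_coeff]
  conv_rhs => rw [← p.support_sum_monomial_coeff]
  simp only [map_sum, Finset.mul_sum]
  rw [Finset.sum_comm]
  apply Finset.sum_congr rfl
  intro s hs
  have hdeg : s.degree = d := by
    rw [Finsupp.degree_eq_weight_one]; exact h (MvPolynomial.mem_support_iff.mp hs)
  have key : ∀ i : Fin n, X i * pderiv i (monomial s (coeff s p)) =
      C ((s i : ℝ)) * monomial s (coeff s p) := by
    intro i
    rw [pderiv_monomial, X, monomial_mul]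
    rcases Nat.eq_zero_or_pos (s i) with h0 | h0
    · simp [h0]
    · have hle : Finsupp.single i 1 ≤ s := Finsupp.single_le_iff.mpr h0
      rw [add_comm, tsub_add_cancel_of_le hle, one_mul, mul_comm (coeff s p) _,
        ← C_mul_monomial]
  rw [Finset.sum_congr rfl fun i _ => key i, ← Finset.sum_mul, ← map_sum, ← hdeg,
    aux_degree_sum, Nat.cast_sum]

lemma aux_C2 : (C (2:ℝ) : MvPolynomial (Fin n) ℝ) = 2 := map_ofNat _ 2

lemma aux_C4 : (C (4:ℝ) : MvPolynomial (Fin n) ℝ) = 4 := map_ofNat _ 4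

lemma aux_lap_X_mul (j : Fin n) (p : MvPolynomial (Fin n) ℝ)
    (h : (∑ i, pderiv i (pderiv i p)) = 0) :
    (∑ i, pderiv i (pderiv i (X j * p))) = C 2 * pderiv j p := by
  have e1 : ∀ i : Fin n, pderiv i (pderiv i (X j * p)) =
      pderiv i (X j) * pderiv i p +
        (pderiv i (X j) * pderiv i p + X j * pderiv i (pderiv i p)) := by
    intro i
    rw [pderiv_mul, map_add, pderiv_mul, pderiv_mul]
    have h0 : pderiv i (pderiv i (X j : MvPolynomial (Fin n) ℝ)) = 0 := by
      rcases eq_or_ne j i with rfl | hij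
      · simp
      · rw [pderiv_X_of_ne hij, map_zero]
    rw [h0, zero_mul, zero_add]
  have e2 : ∑ i, pderiv i (X j) * pderiv i p = pderiv j p := by
    rw [Finset.sum_eq_single j]
    · simp
    · intro i _ hij
      rw [pderiv_X_of_ne (Ne.symm hij), zero_mul]
    · simp
  rw [Finset.sum_congr rfl (fun i _ => e1 i), Finset.sum_add_distrib,
    Finset.sum_add_distrib, ← Finset.mul_sum, h, mul_zero, add_zero, e2]
  rw [aux_C2]
  ring


lemma aux_lap_S_mul (q : MvPolynomial (Fin n) ℝ) (e : ℝ)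
    (heuler : ∑ i, X i * pderiv i q = C e * q)
    (hlap : (∑ i, pderiv i (pderiv i q)) = 0) :
    (∑ i, pderiv i (pderiv i ((∑ k, X k ^ 2) * q))) = C (2 * n + 4 * e) * q := by
  have eS : ∀ i : Fin n, pderiv i (∑ k, (X k : MvPolynomial (Fin n) ℝ) ^ 2) = C 2 * X i := by
    intro i
    rw [map_sum, Finset.sum_eq_single i]
    · rw [pderiv_pow, pderiv_X_self, mul_one, pow_one, Nat.cast_ofNat, aux_C2]
    · intro k _ hki
      rw [pderiv_pow, pderiv_X_of_ne hki, mul_zero]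
    · simp
  have e1 : ∀ i : Fin n, pderiv i (pderiv i ((∑ k, X k ^ 2) * q)) =
      C 2 * q + C 2 * (X i * pderiv i q) + C 2 * (X i * pderiv i q) +
        (∑ k, X k ^ 2) * pderiv i (pderiv i q) := by
    intro i
    rw [pderiv_mul, eS, map_add, pderiv_mul, pderiv_mul, pderiv_mul, eS]
    simp only [pderiv_C, zero_mul, zero_add, pderiv_X_self, mul_one]
    ring
  rw [Finset.sum_congr rfl (fun i _ => e1 i)]
  simp only [Finset.sum_add_distrib, ← Finset.mul_sum]
  rw [heuler, hlap, mul_zero, add_zero, Finset.sum_const, Finset.card_univ, Fintype.card_fin]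
  rw [nsmul_eq_mul, ← map_natCast (C : ℝ →+* MvPolynomial (Fin n) ℝ) n]
  rw [show ((C (2 * (n:ℝ) + 4 * e) : MvPolynomial (Fin n) ℝ)) = C (n:ℝ) * C 2 + C 4 * C e by
    rw [← map_mul, ← map_mul, ← map_add]; congr 1; ring]
  rw [aux_C2, aux_C4]
  ring

lemma aux_pderiv_zero (j : Fin n) {p : MvPolynomial (Fin n) ℝ}
    (hhom : p.IsHomogeneous 0) : pderiv j p = 0 := by
  conv_lhs => rw [← p.support_sum_monomial_coeff, map_sum]
  apply Finset.sum_eq_zero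
  intro s hs
  have h0 := (totalDegree_eq_zero_iff _ p).mp
    ((totalDegree_zero_iff_isHomogeneous _).mpr hhom) s hs j
  rw [pderiv_monomial, h0]
  simp

/-- decomposition `x_j p = p_j⁺ + |x|² p_j⁻` of the product of a coordinate with a
harmonic homogeneous polynomial into harmonic homogeneous parts. -/
theorem stmt11 (n : ℕ) (hn : 1 ≤ n) (d : ℕ) (hd : 2 * (d : ℝ) + (n : ℝ) - 2 ≠ 0) (j : Fin n)
    (p : MvPolynomial (Fin n) ℝ)
    (hharm : (∑ i, pderiv i (pderiv i p)) = 0)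
    (hhom : p.IsHomogeneous d) :
    X j * p =
        (X j * p - C ((2 * (d : ℝ) + (n : ℝ) - 2)⁻¹) * (∑ i, X i ^ 2) * pderiv j p) +
          (∑ i, X i ^ 2) * (C ((2 * (d : ℝ) + (n : ℝ) - 2)⁻¹) * pderiv j p) ∧
      (∑ i, pderiv i (pderiv i
        (X j * p - C ((2 * (d : ℝ) + (n : ℝ) - 2)⁻¹) * (∑ i, X i ^ 2) * pderiv j p))) = 0 ∧
      (X j * p - C ((2 * (d : ℝ) + (n : ℝ) - 2)⁻¹) * (∑ i, X i ^ 2) *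
        pderiv j p).IsHomogeneous (d + 1) ∧
      (∑ i, pderiv i (pderiv i (C ((2 * (d : ℝ) + (n : ℝ) - 2)⁻¹) * pderiv j p))) = 0 ∧
      (C ((2 * (d : ℝ) + (n : ℝ) - 2)⁻¹) * pderiv j p).IsHomogeneous (d - 1) ∧
      (d = 0 → C ((2 * (d : ℝ) + (n : ℝ) - 2)⁻¹) * pderiv j p = 0) := by
  have hq : (∑ i, pderiv i (pderiv i (pderiv j p))) = 0 := aux_lap_pderiv j p hharm
  have hqh : (pderiv j p).IsHomogeneous (d - 1) := aux_pderiv_homog j hhom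
  have hS : (∑ i, (X i : MvPolynomial (Fin n) ℝ) ^ 2).IsHomogeneous 2 :=
    MvPolynomial.IsHomogeneous.sum _ _ _ (fun i _ => isHomogeneous_X_pow i 2)
  rcases Nat.eq_zero_or_pos d with rfl | hd1
  · have hq0 : pderiv j p = 0 := aux_pderiv_zero j hhom
    refine ⟨by ring, ?_, ?_, ?_, ?_, ?_⟩
    · rw [hq0, mul_zero, sub_zero, aux_lap_X_mul j p hharm, hq0, mul_zero]
    · rw [hq0, mul_zero, sub_zero]
      simpa using (isHomogeneous_X ℝ j).mul hhom
    · rw [hq0, mul_zero]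
      simp
    · rw [hq0, mul_zero]
      exact isHomogeneous_zero _ _ _
    · intro _
      rw [hq0, mul_zero]
  · have hcast : ((d - 1 : ℕ) : ℝ) = (d : ℝ) - 1 := by
      push_cast [hd1]
      ring
    have heuler : ∑ i, X i * pderiv i (pderiv j p) = C ((d:ℝ) - 1) * pderiv j p := by
      rw [← hcast]
      exact aux_euler hqh
    have hlapS := aux_lap_S_mul (pderiv j p) ((d:ℝ) - 1) heuler hq
    refine ⟨by ring, ?_, ?_, ?_, ?_, ?_⟩
    · simp only [map_sub, Finset.sum_sub_distrib, mul_assoc, pderiv_C_mul]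
      rw [← Finset.mul_sum, aux_lap_X_mul j p hharm, hlapS, ← mul_assoc, ← map_mul]
      have : (2 * (d : ℝ) + (n : ℝ) - 2)⁻¹ * (2 * (n:ℝ) + 4 * ((d:ℝ) - 1)) = 2 := by
        field_simp
        ring
      rw [this, sub_self]
    · apply MvPolynomial.IsHomogeneous.sub
      · simpa [add_comm] using (isHomogeneous_X ℝ j).mul hhom
      · have h2 : (C ((2 * (d : ℝ) + (n : ℝ) - 2)⁻¹) * (∑ i, X i ^ 2) *
            pderiv j p).IsHomogeneous (0 + 2 + (d - 1)) :=
          ((isHomogeneous_C _ _).mul hS).mul hqh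
        have : 0 + 2 + (d - 1) = d + 1 := by omega
        rwa [this] at h2
    · simp only [pderiv_C_mul]
      rw [← Finset.mul_sum, hq, mul_zero]
    · simpa using (isHomogeneous_C _ _).mul hqh
    · intro h0
      omega
end
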